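/- Let T₀ > 0, let 0 < μ₁ < μ₂, let ω be a modulus of continuity, and let c : [0,T₀] → ℝ be continuous with μ₁ ≤ c(t) ≤ μ₂ and |c(t) − c(s)| ≤ ω(|t−s|) for all t,s ∈ [0,T₀]. Then for every λ > 0, every solution u of u'' + λ²·c(t)·u = 0 on [0,T₀] satisfies u'(t)² + λ²·u(t)² ≤ √M₁·(u'(0)² + λ²·u(0)²)·exp(M₂·λ·ω(1/λ)·t) for every t ∈ [0,T₀], where M₁ := (max{1,μ₂}/min{1,μ₁})² and M₂ := 1/μ₁ + 1/√μ₁. -/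

import Mathlib

open Set Filter MeasureTheory

/-- A modulus of continuity: positive for positive arguments, tends to `0` at `0⁺`,
nondecreasing, and `σ ↦ σ / ω σ` is nondecreasing on `(0, ∞)`. -/
def IsModulusOfContinuity (ω : ℝ → ℝ) : Prop :=
  (∀ σ : ℝ, 0 < σ → 0 < ω σ) ∧
  Tendsto ω (nhdsWithin 0 (Ioi 0)) (nhds 0) ∧
  (∀ s t : ℝ, 0 ≤ s → s ≤ t → ω s ≤ ω t) ∧
  (∀ s t : ℝ, 0 < s → s ≤ t → s / ω s ≤ t / ω t)

/-- Membership in the class `PS(T₀, μ₁, μ₂, ω, θ)` of propagation speeds. -/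
def MemPS (T0 μ1 μ2 : ℝ) (ω θ : ℝ → ℝ) (c : ℝ → ℝ) : Prop :=
  ContinuousOn c (Icc 0 T0) ∧
  LocallyLipschitzOn (Ioo 0 T0) c ∧
  (∀ t ∈ Ioo 0 T0, μ1 ≤ c t ∧ c t ≤ μ2) ∧
  (∀ t ∈ Icc 0 T0, ∀ s ∈ Icc 0 T0, |c t - c s| ≤ ω |t - s|) ∧
  (∀ᵐ t ∂(volume.restrict (Ioo 0 T0)), |deriv c t| ≤ θ t)

/-- The key quantity `m(λ) = inf { λ ω(1/λ) s + ∫_s^{T₀} θ : s ∈ (0, T₀] }`. -/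
noncomputable def mFun (T0 : ℝ) (ω θ : ℝ → ℝ) (lam : ℝ) : ℝ :=
  sInf ((fun s => lam * ω (1 / lam) * s + ∫ t in s..T0, θ t) '' Ioc 0 T0)

/-- Derivative within the time interval `[0, T₀]`. -/
noncomputable def der (T0 : ℝ) (u : ℝ → ℝ) : ℝ → ℝ :=
  fun t => derivWithin u (Icc 0 T0) t

/-- `u` is a (twice differentiable) solution of `u'' + λ² c(t) u = 0` on `[0, T₀]`. -/
def IsSol (T0 lam : ℝ) (c u : ℝ → ℝ) : Prop :=
  ∀ t ∈ Icc 0 T0,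
    HasDerivWithinAt u (der T0 u t) (Icc 0 T0) t ∧
    HasDerivWithinAt (der T0 u) (-(lam ^ 2 * c t * u t)) (Icc 0 T0) t

/-- Constant `M₁ = (max{1,μ₂}/min{1,μ₁})²`. -/
noncomputable def M1 (μ1 μ2 : ℝ) : ℝ := (max 1 μ2 / min 1 μ1) ^ 2

/-- Constant `M₂ = 1/μ₁ + 1/√μ₁`. -/
noncomputable def M2 (μ1 : ℝ) : ℝ := 1 / μ1 + 1 / Real.sqrt μ1


private lemma aux_gronwall_step (T0 μ1 : ℝ) (ω : ℝ → ℝ) (hμ1 : 0 < μ1)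
    (c : ℝ → ℝ) (lam : ℝ) (hlam : 0 < lam) (u : ℝ → ℝ) (hu : IsSol T0 lam c u)
    (hw : 0 ≤ ω (1 / lam))
    (a b : ℝ) (ha0 : 0 ≤ a) (hbT : b ≤ T0) (hab : a ≤ b)
    (hca : μ1 ≤ c a)
    (hcw : ∀ t ∈ Icc a b, |c a - c t| ≤ ω (1 / lam)) :
    ∀ t ∈ Icc a b, (der T0 u t) ^ 2 + lam ^ 2 * c a * (u t) ^ 2 ≤
      ((der T0 u a) ^ 2 + lam ^ 2 * c a * (u a) ^ 2) *
        Real.exp (lam * ω (1 / lam) / Real.sqrt μ1 * (t - a)) := by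
  have hsμ : 0 < Real.sqrt μ1 := Real.sqrt_pos.2 hμ1
  have hcann : 0 < c a := lt_of_lt_of_le hμ1 hca
  set w := ω (1 / lam) with hwdef
  set K := lam * w / Real.sqrt μ1 with hKdef
  set f : ℝ → ℝ := fun t => (der T0 u t) ^ 2 + lam ^ 2 * c a * (u t) ^ 2 with hfdef
  set f' : ℝ → ℝ := fun t => 2 * lam ^ 2 * u t * der T0 u t * (c a - c t) with hf'def
  have hsub : Icc a b ⊆ Icc 0 T0 := Icc_subset_Icc ha0 hbT
  have hfnn : ∀ t, 0 ≤ f t := by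
    intro t; simp only [hfdef]; positivity
  have hcont : ContinuousOn f (Icc a b) := by
    intro t ht
    have ht' := hsub ht
    have h1 := ((hu t ht').1.continuousWithinAt.mono hsub)
    have h2 := ((hu t ht').2.continuousWithinAt.mono hsub)
    exact (h2.pow 2).add (continuousWithinAt_const.mul (h1.pow 2))
  have hderiv : ∀ t ∈ Ico a b, HasDerivWithinAt f (f' t) (Ici t) t := by
    intro t ht
    have ht' : t ∈ Icc 0 T0 := hsub (Ico_subset_Icc_self ht)
    have htlt : t < T0 := lt_of_lt_of_le ht.2 hbT
    have hmem : Icc (0:ℝ) T0 ∈ nhdsWithin t (Ici t) :=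
      Icc_mem_nhdsGE_of_mem ⟨ht'.1, htlt⟩
    have h1 := (hu t ht').1
    have h2 := (hu t ht').2
    have hD : HasDerivWithinAt f
        ((2 : ℕ) * (der T0 u t) ^ 1 * (-(lam ^ 2 * c t * u t)) +
          lam ^ 2 * c a * ((2 : ℕ) * (u t) ^ 1 * der T0 u t)) (Icc 0 T0) t :=
      (h2.pow 2).add ((h1.pow 2).const_mul (lam ^ 2 * c a))
    have hD' := hD.mono_of_mem_nhdsWithin hmem
    refine hD'.congr_deriv ?_
    simp only [hf'def, pow_one, Nat.cast_ofNat]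
    ring
  have hbound : ∀ t ∈ Ico a b, ‖f' t‖ ≤ K * ‖f t‖ + 0 := by
    intro t ht
    have ht' : t ∈ Icc a b := Ico_subset_Icc_self ht
    have hfn : 0 ≤ f t := hfnn t
    rw [Real.norm_eq_abs, Real.norm_eq_abs, abs_of_nonneg hfn, add_zero]
    have hcaω := hcw t ht'
    set d := der T0 u t with hd
    set v := u t with hv
    set sγ := Real.sqrt (c a) with hsγ
    have hsγ2 : sγ ^ 2 = c a := Real.sq_sqrt hcann.le
    have hsγpos : 0 < sγ := Real.sqrt_pos.2 hcann
    have hsγμ : Real.sqrt μ1 ≤ sγ := Real.sqrt_le_sqrt hca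
    have hda : |d| ^ 2 = d ^ 2 := sq_abs d
    have hva : |v| ^ 2 = v ^ 2 := sq_abs v
    have h1 : |f' t| ≤ 2 * lam ^ 2 * |v| * |d| * w := by
      have he : f' t = 2 * lam ^ 2 * v * d * (c a - c t) := rfl
      rw [he, abs_mul]
      have he2 : |2 * lam ^ 2 * v * d| = 2 * lam ^ 2 * |v| * |d| := by
        rw [abs_mul, abs_mul, abs_of_nonneg (by positivity : (0:ℝ) ≤ 2 * lam ^ 2)]
      rw [he2]
      exact mul_le_mul_of_nonneg_left hcaω (by positivity)
    have hsq' : 2 * sγ * lam * (|d| * |v|) ≤ d ^ 2 + c a * lam ^ 2 * v ^ 2 := by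
      have h := sq_nonneg (|d| - sγ * lam * |v|)
      have he : (|d| - sγ * lam * |v|) ^ 2 =
          |d| ^ 2 - 2 * sγ * lam * (|d| * |v|) + sγ ^ 2 * lam ^ 2 * |v| ^ 2 := by ring
      rw [he, hda, hva, hsγ2] at h
      linarith
    have h2 : sγ * (2 * lam ^ 2 * |v| * |d|) ≤ lam * f t := by
      calc sγ * (2 * lam ^ 2 * |v| * |d|) = lam * (2 * sγ * lam * (|d| * |v|)) := by ring
        _ ≤ lam * (d ^ 2 + c a * lam ^ 2 * v ^ 2) :=
            mul_le_mul_of_nonneg_left hsq' hlam.le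
        _ = lam * f t := by simp only [hfdef]; ring
    calc |f' t| ≤ 2 * lam ^ 2 * |v| * |d| * w := h1
      _ ≤ (lam * f t / sγ) * w := by
          apply mul_le_mul_of_nonneg_right _ hw
          rw [le_div_iff₀ hsγpos]
          linarith [h2]
      _ ≤ (lam * f t / Real.sqrt μ1) * w := by
          apply mul_le_mul_of_nonneg_right _ hw
          apply div_le_div_of_nonneg_left _ hsμ hsγμ
          positivity
      _ = K * f t := by rw [hKdef]; ring
  have hGa : ‖f a‖ ≤ f a := by
    rw [Real.norm_eq_abs, abs_of_nonneg (hfnn a)]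
  have hG := norm_le_gronwallBound_of_norm_deriv_right_le hcont hderiv hGa hbound
  intro t ht
  have h := hG t ht
  rw [Real.norm_eq_abs, abs_of_nonneg (hfnn t), gronwallBound_ε0] at h
  exact h

set_option maxHeartbeats 2000000 in
/-- energy estimate for `ω`-continuous coefficients, estimate
(est:E-kov) in the proof of Theorem 1.(1). -/
theorem energy_estimate_omega_continuous
    (T0 μ1 μ2 : ℝ) (ω : ℝ → ℝ)
    (hT0 : 0 < T0) (hμ1 : 0 < μ1) (hμ12 : μ1 < μ2)
    (hω : IsModulusOfContinuity ω)
    (c : ℝ → ℝ) (hccont : ContinuousOn c (Icc 0 T0))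
    (hcbound : ∀ t ∈ Icc 0 T0, μ1 ≤ c t ∧ c t ≤ μ2)
    (hcomega : ∀ t ∈ Icc 0 T0, ∀ s ∈ Icc 0 T0, |c t - c s| ≤ ω |t - s|)
    (lam : ℝ) (hlam : 0 < lam)
    (u : ℝ → ℝ) (hu : IsSol T0 lam c u) :
    ∀ t ∈ Icc 0 T0,
      (der T0 u t) ^ 2 + lam ^ 2 * (u t) ^ 2 ≤
        Real.sqrt (M1 μ1 μ2) * ((der T0 u 0) ^ 2 + lam ^ 2 * (u 0) ^ 2) *
          Real.exp (M2 μ1 * (lam * ω (1 / lam)) * t) := by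
  obtain ⟨hωpos, -, hωmono, -⟩ := hω
  set w := ω (1 / lam) with hwdef
  have hw : 0 ≤ w := (hωpos _ (by positivity)).le
  have hsμ : 0 < Real.sqrt μ1 := Real.sqrt_pos.2 hμ1
  set K := lam * w / Real.sqrt μ1 with hKdef
  set J := w / μ1 with hJdef
  have hJ0 : 0 ≤ J := by positivity
  set E : ℝ → ℝ := fun s => (der T0 u s) ^ 2 + lam ^ 2 * c s * (u s) ^ 2 with hEdef
  have hEnn : ∀ s, s ∈ Icc 0 T0 → 0 ≤ E s := by
    intro s hs
    have h1 : (0:ℝ) < c s := lt_of_lt_of_le hμ1 (hcbound s hs).1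
    simp only [hEdef]; positivity
  have key : ∀ a b : ℝ, 0 ≤ a → b ≤ T0 → a ≤ b → b - a ≤ 1 / lam →
      ∀ t ∈ Icc a b, (der T0 u t) ^ 2 + lam ^ 2 * c a * (u t) ^ 2 ≤
        ((der T0 u a) ^ 2 + lam ^ 2 * c a * (u a) ^ 2) * Real.exp (K * (t - a)) := by
    intro a b ha0 hbT hab hstep
    have haI : a ∈ Icc 0 T0 := ⟨ha0, hab.trans hbT⟩
    have hca : μ1 ≤ c a := (hcbound a haI).1
    refine aux_gronwall_step T0 μ1 ω hμ1 c lam hlam u hu hw a b ha0 hbT hab hca ?_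
    intro t ht
    have htI : t ∈ Icc 0 T0 := ⟨ha0.trans ht.1, ht.2.trans hbT⟩
    calc |c a - c t| ≤ ω |a - t| := hcomega a haI t htI
      _ ≤ ω (1 / lam) := by
          apply hωmono _ _ (abs_nonneg _)
          rw [abs_sub_comm, abs_of_nonneg (sub_nonneg.2 ht.1)]
          linarith [ht.2]
  have claim : ∀ k : ℕ, E (min ((k : ℝ) / lam) T0) ≤
      E 0 * Real.exp (K * min ((k : ℝ) / lam) T0 + J * k) := by
    intro k
    induction k with
    | zero =>
      simp only [Nat.cast_zero, zero_div, min_eq_left hT0.le, mul_zero, add_zero, Real.exp_zero,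
        mul_one, le_refl]
    | succ k ih =>
      have hcast : ((k + 1 : ℕ) : ℝ) = (k : ℝ) + 1 := by push_cast; ring
      rw [hcast]
      set a := min ((k : ℝ) / lam) T0 with hadef
      set b := min (((k : ℝ) + 1) / lam) T0 with hbdef
      have ha0 : 0 ≤ a := le_min (by positivity) hT0.le
      have hbT : b ≤ T0 := min_le_right _ _
      have haT : a ≤ T0 := min_le_right _ _
      have hab : a ≤ b := by
        apply min_le_min _ le_rfl
        apply div_le_div_of_nonneg_right (by linarith) hlam.le
      have hstep : b - a ≤ 1 / lam := by
        rcases le_total ((k : ℝ) / lam) T0 with h | h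
        · have hA : a = (k : ℝ) / lam := min_eq_left h
          have hB : b ≤ ((k : ℝ) + 1) / lam := min_le_left _ _
          have : ((k : ℝ) + 1) / lam = (k : ℝ) / lam + 1 / lam := by ring
          rw [hA]; linarith
        · have hA : a = T0 := min_eq_right h
          have hB : b ≤ T0 := min_le_right _ _
          have : (0:ℝ) ≤ 1 / lam := by positivity
          linarith
      have haI : a ∈ Icc 0 T0 := ⟨ha0, haT⟩
      have hbI : b ∈ Icc 0 T0 := ⟨ha0.trans hab, hbT⟩
      have hca : μ1 ≤ c a := (hcbound a haI).1
      -- Gronwall on [a, b] with frozen coefficient c a, evaluated at b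
      have h1 := key a b ha0 hbT hab hstep b ⟨hab, le_refl b⟩
      -- jump estimate at b
      have hcab : |c b - c a| ≤ w := by
        calc |c b - c a| ≤ ω |b - a| := hcomega b hbI a haI
          _ ≤ ω (1 / lam) := by
              apply hωmono _ _ (abs_nonneg _)
              rw [abs_of_nonneg (sub_nonneg.2 hab)]
              exact hstep
      have hjump : E b ≤ ((der T0 u b) ^ 2 + lam ^ 2 * c a * (u b) ^ 2) * Real.exp J := by
        have hexpJ : 1 + J ≤ Real.exp J := by linarith [Real.add_one_le_exp J]
        have hcb : c b - c a ≤ w := (abs_le.1 hcab).2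
        have hfrozen_nn : 0 ≤ (der T0 u b) ^ 2 + lam ^ 2 * c a * (u b) ^ 2 := by
          have : (0:ℝ) < c a := lt_of_lt_of_le hμ1 hca
          positivity
        have hJμ : J * μ1 = w := div_mul_cancel₀ w (ne_of_gt hμ1)
        have hint1 : 0 ≤ J * (c a - μ1) * (lam ^ 2 * (u b) ^ 2) := by
          apply mul_nonneg (mul_nonneg hJ0 (by linarith)) (by positivity)
        have hint2 : 0 ≤ J * (der T0 u b) ^ 2 := mul_nonneg hJ0 (sq_nonneg _)
        have hint3 : 0 ≤ ((der T0 u b) ^ 2 + lam ^ 2 * c a * (u b) ^ 2) * (Real.exp J - 1 - J) :=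
          mul_nonneg hfrozen_nn (by linarith)
        have hint4 : (c b - c a) * (lam ^ 2 * (u b) ^ 2) ≤ w * (lam ^ 2 * (u b) ^ 2) :=
          mul_le_mul_of_nonneg_right hcb (by positivity)
        simp only [hEdef]
        nlinarith [hint1, hint2, hint3, hint4, hJμ]
      -- combine
      have hexpK : (0:ℝ) ≤ Real.exp (K * (b - a)) := (Real.exp_pos _).le
      have hexpJ' : (0:ℝ) ≤ Real.exp J := (Real.exp_pos _).le
      calc E b ≤ ((der T0 u b) ^ 2 + lam ^ 2 * c a * (u b) ^ 2) * Real.exp J := hjump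
        _ ≤ (((der T0 u a) ^ 2 + lam ^ 2 * c a * (u a) ^ 2) * Real.exp (K * (b - a))) *
              Real.exp J := mul_le_mul_of_nonneg_right h1 hexpJ'
        _ = (E a * Real.exp (K * (b - a))) * Real.exp J := by simp only [hEdef]
        _ ≤ ((E 0 * Real.exp (K * a + J * k)) * Real.exp (K * (b - a))) * Real.exp J := by
            apply mul_le_mul_of_nonneg_right _ hexpJ'
            exact mul_le_mul_of_nonneg_right ih hexpK
        _ = E 0 * Real.exp (K * b + J * ((k : ℝ) + 1)) := by
            rw [mul_assoc, mul_assoc, ← Real.exp_add, ← Real.exp_add]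
            ring_nf
  -- final step
  intro t ht
  have ht0 : 0 ≤ t := ht.1
  have htT : t ≤ T0 := ht.2
  set k : ℕ := (⌊lam * t⌋).toNat with hkdef
  have hltnn : 0 ≤ lam * t := mul_nonneg hlam.le ht0
  have hfloor : ((⌊lam * t⌋).toNat : ℤ) = ⌊lam * t⌋ := Int.toNat_of_nonneg (Int.floor_nonneg.2 hltnn)
  have hk1 : (k : ℝ) ≤ lam * t := by
    rw [hkdef]
    calc ((((⌊lam * t⌋).toNat : ℤ)) : ℝ) = ((⌊lam * t⌋ : ℤ) : ℝ) := by rw [hfloor]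
      _ ≤ lam * t := Int.floor_le _
  have hk2 : lam * t ≤ (k : ℝ) + 1 := by
    rw [hkdef]
    have := Int.lt_floor_add_one (lam * t)
    calc lam * t ≤ ((⌊lam * t⌋ : ℤ) : ℝ) + 1 := this.le
      _ = ((((⌊lam * t⌋).toNat : ℤ)) : ℝ) + 1 := by rw [hfloor]
  have hat : (k : ℝ) / lam ≤ t := by
    rw [div_le_iff₀ hlam]; linarith [hk1]
  have hamin : min ((k : ℝ) / lam) T0 = (k : ℝ) / lam := min_eq_left (hat.trans htT)
  set a := (k : ℝ) / lam with hadef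
  set b := min (((k : ℝ) + 1) / lam) T0 with hbdef
  have htb : t ≤ b := by
    apply le_min _ htT
    rw [le_div_iff₀ hlam]; linarith [hk2]
  have ha0 : 0 ≤ a := by positivity
  have hab : a ≤ b := hat.trans htb
  have hbT : b ≤ T0 := min_le_right _ _
  have hstep : b - a ≤ 1 / lam := by
    have hB : b ≤ ((k : ℝ) + 1) / lam := min_le_left _ _
    have : ((k : ℝ) + 1) / lam = (k : ℝ) / lam + 1 / lam := by ring
    rw [hadef]; linarith
  have h1 := key a b ha0 hbT hab hstep t ⟨hat, htb⟩
  have h2 := claim k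
  rw [hamin] at h2
  have hE00 : 0 ≤ E 0 := hEnn 0 ⟨le_refl 0, hT0.le⟩
  have hEa : E a = (der T0 u a) ^ 2 + lam ^ 2 * c a * (u a) ^ 2 := rfl
  have hchain : (der T0 u t) ^ 2 + lam ^ 2 * c a * (u t) ^ 2 ≤
      E 0 * Real.exp (M2 μ1 * (lam * w) * t) := by
    have hstep1 : (der T0 u t) ^ 2 + lam ^ 2 * c a * (u t) ^ 2 ≤
        (E 0 * Real.exp (K * a + J * k)) * Real.exp (K * (t - a)) := by
      calc (der T0 u t) ^ 2 + lam ^ 2 * c a * (u t) ^ 2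
          ≤ ((der T0 u a) ^ 2 + lam ^ 2 * c a * (u a) ^ 2) * Real.exp (K * (t - a)) := h1
        _ = E a * Real.exp (K * (t - a)) := by rw [hEa]
        _ ≤ (E 0 * Real.exp (K * a + J * k)) * Real.exp (K * (t - a)) :=
            mul_le_mul_of_nonneg_right h2 (Real.exp_pos _).le
    have heq : (E 0 * Real.exp (K * a + J * k)) * Real.exp (K * (t - a)) =
        E 0 * Real.exp (K * t + J * k) := by
      rw [mul_assoc, ← Real.exp_add]; ring_nf
    have hmono : Real.exp (K * t + J * k) ≤ Real.exp (M2 μ1 * (lam * w) * t) := by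
      apply Real.exp_le_exp.2
      have hJk : J * k ≤ J * (lam * t) := mul_le_mul_of_nonneg_left hk1 hJ0
      have hM : M2 μ1 * (lam * w) * t = K * t + J * (lam * t) := by
        rw [M2, hKdef, hJdef]
        field_simp
        ring
      linarith
    calc (der T0 u t) ^ 2 + lam ^ 2 * c a * (u t) ^ 2
        ≤ (E 0 * Real.exp (K * a + J * k)) * Real.exp (K * (t - a)) := hstep1
      _ = E 0 * Real.exp (K * t + J * k) := heq
      _ ≤ E 0 * Real.exp (M2 μ1 * (lam * w) * t) :=
          mul_le_mul_of_nonneg_left hmono hE00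
  -- convert energies
  set m := min 1 μ1 with hmdef
  set Mx := max 1 μ2 with hMxdef
  have hm : 0 < m := lt_min one_pos hμ1
  have hsqrtM1 : Real.sqrt (M1 μ1 μ2) = Mx / m := by
    rw [M1]
    exact Real.sqrt_sq (by positivity)
  have haI : a ∈ Icc 0 T0 := ⟨ha0, hab.trans hbT⟩
  have hca : μ1 ≤ c a := (hcbound a haI).1
  have hc0 : c 0 ≤ μ2 := (hcbound 0 ⟨le_refl 0, hT0.le⟩).2
  have hgoal1 : m * ((der T0 u t) ^ 2 + lam ^ 2 * (u t) ^ 2) ≤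
      (der T0 u t) ^ 2 + lam ^ 2 * c a * (u t) ^ 2 := by
    have hm1 : m ≤ 1 := min_le_left _ _
    have hm2 : m ≤ c a := (min_le_right _ _).trans hca
    nlinarith [sq_nonneg (der T0 u t), mul_nonneg (sub_nonneg.2 hm2)
      (mul_nonneg (sq_nonneg lam) (sq_nonneg (u t))),
      mul_nonneg (sub_nonneg.2 hm1) (sq_nonneg (der T0 u t))]
  have hgoal2 : E 0 ≤ Mx * ((der T0 u 0) ^ 2 + lam ^ 2 * (u 0) ^ 2) := by
    have hMx1 : (1:ℝ) ≤ Mx := le_max_left _ _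
    have hMx2 : c 0 ≤ Mx := hc0.trans (le_max_right _ _)
    simp only [hEdef]
    nlinarith [mul_nonneg (sub_nonneg.2 hMx2) (mul_nonneg (sq_nonneg lam) (sq_nonneg (u 0))),
      mul_nonneg (sub_nonneg.2 hMx1) (sq_nonneg (der T0 u 0))]
  rw [hsqrtM1]
  have hX : (0:ℝ) < Real.exp (M2 μ1 * (lam * w) * t) := Real.exp_pos _
  rw [div_mul_eq_mul_div, div_mul_eq_mul_div, le_div_iff₀ hm]
  have hlast : E 0 * Real.exp (M2 μ1 * (lam * w) * t) ≤
      (Mx * ((der T0 u 0) ^ 2 + lam ^ 2 * (u 0) ^ 2)) * Real.exp (M2 μ1 * (lam * w) * t) :=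
    mul_le_mul_of_nonneg_right hgoal2 hX.le
  calc ((der T0 u t) ^ 2 + lam ^ 2 * (u t) ^ 2) * m
      = m * ((der T0 u t) ^ 2 + lam ^ 2 * (u t) ^ 2) := by ring
    _ ≤ (der T0 u t) ^ 2 + lam ^ 2 * c a * (u t) ^ 2 := hgoal1
    _ ≤ E 0 * Real.exp (M2 μ1 * (lam * w) * t) := hchain
    _ ≤ Mx * ((der T0 u 0) ^ 2 + lam ^ 2 * (u 0) ^ 2) * Real.exp (M2 μ1 * (lam * w) * t) := hlast
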